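/- Q-values of selected tests are computable from the selected subset alone (Section 5.2): define the q-value q_(i) = min{p_(j)·m/j : i ≤ j ≤ m} for 1 ≤ i ≤ m, and let R = r_BH be the BH index at level α. Then for every i with 1 ≤ i ≤ R one has q_(i) = min{p_(j)·m/j : i ≤ j ≤ R} and q_(i) < α, while for every i with R < i ≤ m one has q_(i) ≥ α. -/

import Mathlib

open scoped Classical

/-- `#S(t)`: the number of elements of the multiset `C` that are strictly less than `t`. -/
noncomputable def countBelow (C : Multiset ℝ) (t : ℝ) : ℕ :=
  (C.filter (fun p => p < t)).card

/-- The `k`-th smallest element (1-indexed order statistic, with multiplicity) of `D`. -/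
noncomputable def orderStat (D : Multiset ℝ) (k : ℕ) : ℝ :=
  (D.sort (· ≤ ·)).getD (k - 1) 0

/-- The Benjamini–Hochberg index at level `α`:
`max {i ∈ {1,…,m} : p_(i) < i·α/m}`, with value `0` if this set is empty. -/
noncomputable def rBH (α : ℝ) (C : Multiset ℝ) : ℕ :=
  ((Finset.Icc 1 C.card).filter
    (fun i => orderStat C i < (i : ℝ) * α / (C.card : ℝ))).sup id

/-- The q-value (BH-adjusted p-value) of the `i`-th order statistic of `C` in a testing
problem of `m` p-values: `q_(i) = min {p_(j)·m/j : i ≤ j ≤ m}`. -/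
noncomputable def qval (m : ℕ) (C : Multiset ℝ) (i : ℕ) : ℝ :=
  sInf ((fun j : ℕ => orderStat C j * (m : ℝ) / (j : ℝ)) '' Set.Icc i m)


lemma orderStat_nonneg (C : Multiset ℝ) (hC : ∀ p ∈ C, 0 ≤ p ∧ p ≤ 1) (j : ℕ) :
    0 ≤ orderStat C j := by
  unfold orderStat
  by_cases h : j - 1 < (C.sort (· ≤ ·)).length
  · rw [List.getD_eq_getElem _ _ h]
    exact (hC _ ((Multiset.mem_sort _).mp (List.getElem_mem h))).1
  · rw [List.getD_eq_default _ _ (not_lt.mp h)]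

lemma lt_alpha {p α : ℝ} {j m : ℕ} (hj : 0 < j) (hm : 0 < m) (h : p < (j:ℝ)*α/(m:ℝ)) :
    p * (m:ℝ) / (j:ℝ) < α := by
  have hj' : (0:ℝ) < j := Nat.cast_pos.mpr hj
  have hm' : (0:ℝ) < m := Nat.cast_pos.mpr hm
  rw [div_lt_iff₀ hj']
  rw [lt_div_iff₀ hm'] at h
  linarith

lemma ge_alpha {p α : ℝ} {j m : ℕ} (hj : 0 < j) (hm : 0 < m) (h : (j:ℝ)*α/(m:ℝ) ≤ p) :
    α ≤ p * (m:ℝ) / (j:ℝ) := by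
  have hj' : (0:ℝ) < j := Nat.cast_pos.mpr hj
  have hm' : (0:ℝ) < m := Nat.cast_pos.mpr hm
  rw [le_div_iff₀ hj']
  rw [div_le_iff₀ hm'] at h
  linarith

/-- Q-values of selected tests are computable from the selected subset alone
(Section 5.2): with `R = r_BH`, for every `1 ≤ i ≤ R` one has
`q_(i) = min {p_(j)·m/j : i ≤ j ≤ R}` and `q_(i) < α`, while for every `R < i ≤ m` one
has `q_(i) ≥ α`. -/
theorem qvalues_from_selected_subset
    (α : ℝ) (hα0 : 0 < α) (hα1 : α < 1)
    (C : Multiset ℝ) (m : ℕ) (hm : m = C.card)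
    (hC : ∀ p ∈ C, 0 ≤ p ∧ p ≤ 1)
    (R : ℕ) (hR : R = rBH α C) :
    (∀ i, 1 ≤ i → i ≤ R →
        qval m C i
          = sInf ((fun j : ℕ => orderStat C j * (m : ℝ) / (j : ℝ)) '' Set.Icc i R) ∧
        qval m C i < α) ∧
    (∀ i, R < i → i ≤ m → α ≤ qval m C i) := by
  subst hm
  have hnn : ∀ j : ℕ, (0:ℝ) ≤ orderStat C j * (C.card:ℝ) / (j:ℝ) := fun j =>
    div_nonneg (mul_nonneg (orderStat_nonneg C hC j) (Nat.cast_nonneg _)) (Nat.cast_nonneg _)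
  have hgt : ∀ j, R < j → j ≤ C.card → (j:ℝ) * α / (C.card:ℝ) ≤ orderStat C j := by
    intro j h1 h2
    by_contra h
    push_neg at h
    have hj : j ∈ (Finset.Icc 1 C.card).filter
        (fun i => orderStat C i < (i : ℝ) * α / (C.card : ℝ)) :=
      Finset.mem_filter.mpr ⟨Finset.mem_Icc.mpr ⟨by omega, h2⟩, h⟩
    have h3 : j ≤ R := by
      rw [hR]
      exact Finset.le_sup (f := id) hj
    omega
  have hRmem : 1 ≤ R → R ≤ C.card ∧ orderStat C R < (R:ℝ) * α / (C.card:ℝ) := by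
    intro h1
    set S := (Finset.Icc 1 C.card).filter
        (fun i => orderStat C i < (i : ℝ) * α / (C.card : ℝ)) with hSdef
    have hRS : R = S.sup id := hR
    have hSne : S.Nonempty := by
      rcases S.eq_empty_or_nonempty with h | h
      · rw [h] at hRS; simp at hRS; omega
      · exact h
    obtain ⟨b, hb, hbsup⟩ := S.exists_mem_eq_sup hSne id
    have hRb : R = b := by rw [hRS, hbsup]; rfl
    rw [hRb]
    have hmf := Finset.mem_filter.mp hb
    exact ⟨(Finset.mem_Icc.mp hmf.1).2, hmf.2⟩
  simp only [qval]
  set f : ℕ → ℝ := fun j : ℕ => orderStat C j * (C.card : ℝ) / (j : ℝ) with hf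
  have hbdd : ∀ s : Set ℕ, BddBelow (f '' s) := by
    intro s
    exact ⟨0, by rintro x ⟨j, -, rfl⟩; exact hnn j⟩
  constructor
  · intro i hi1 hiR
    obtain ⟨hRm, hpR⟩ := hRmem (le_trans hi1 hiR)
    have hRpos : 0 < R := by omega
    have hmpos : 0 < C.card := by omega
    have hfR : f R < α := lt_alpha hRpos hmpos hpR
    have hRmemB : f R ∈ f '' Set.Icc i R := ⟨R, ⟨hiR, le_refl R⟩, rfl⟩
    have hBne : (f '' Set.Icc i R).Nonempty := ⟨f R, hRmemB⟩
    have hAne : (f '' Set.Icc i C.card).Nonempty := ⟨f R, ⟨R, ⟨hiR, hRm⟩, rfl⟩⟩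
    have hsub : f '' Set.Icc i R ⊆ f '' Set.Icc i C.card :=
      Set.image_mono (Set.Icc_subset_Icc_right hRm)
    have h1 : sInf (f '' Set.Icc i C.card) ≤ sInf (f '' Set.Icc i R) :=
      csInf_le_csInf (hbdd _) hBne hsub
    have hle_fR : sInf (f '' Set.Icc i R) ≤ f R := csInf_le (hbdd _) hRmemB
    have h2 : sInf (f '' Set.Icc i R) ≤ sInf (f '' Set.Icc i C.card) := by
      apply le_csInf hAne
      rintro x ⟨j, ⟨hij, hjm⟩, rfl⟩
      by_cases hjR : j ≤ R
      · exact csInf_le (hbdd _) ⟨j, ⟨hij, hjR⟩, rfl⟩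
      · push_neg at hjR
        have hαf : α ≤ f j := ge_alpha (by omega) hmpos (hgt j hjR hjm)
        linarith
    have heq : sInf (f '' Set.Icc i C.card) = sInf (f '' Set.Icc i R) :=
      le_antisymm h1 h2
    exact ⟨heq, by rw [heq]; linarith⟩
  · intro i hRi him
    have hmpos : 0 < C.card := by omega
    have hne : (f '' Set.Icc i C.card).Nonempty := ⟨f i, ⟨i, ⟨le_refl i, him⟩, rfl⟩⟩
    apply le_csInf hne
    rintro x ⟨j, ⟨hij, hjm⟩, rfl⟩
    exact ge_alpha (by omega) hmpos (hgt j (by omega) hjm)
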